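/- Community aggregation preserves modularity: let G = (V, E, ω) be a finite undirected weighted graph with nonnegative weights and W > 0, and let S be a partition of V. Form the coarsened graph G′ whose vertices are the communities of S, where the weight of the edge between communities C and C′ (allowing C = C′, giving a loop) is ω′(C, C′) = Σ_{i ∈ C, j ∈ C′, (i,j) ∈ E} ω(i,j). Then G′ has the same total edge weight W, and the modularity in G′ of the partition of G′ into singletons equals the modularity in G of the partition S: Q_{G′}(singletons) = Q_G(S). -/
import Mathlib


open Finset

/-- community aggregation preserves modularity.  `w` is the symmetric
nonnegative edge-weight function of `G`, `δ` the weighted degrees, `2W = ∑ i, δ i` with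
`W > 0`, and `S` a partition of the vertex set.  The coarsened graph `G'` has the
communities of `S` as vertices, with edge weights
`w' C C' = ∑ i ∈ C, ∑ j ∈ C', w i j` (a loop when `C = C'`), weighted degrees
`δ' C = ∑ C', w' C C'` and total edge weight `W'` with `2W' = ∑ C, δ' C`.  Then
`W' = W`, and the modularity in `G'` of the partition of `G'` into singletons
(each meta-vertex `C` alone in community `{C}`, so `e_{C→{C}} = w' C C` and
`deg_{{C}} = δ' C`) equals the modularity of `S` in `G`. -/
theorem aggregation_preserves_modularity {V : Type*} [Fintype V] [DecidableEq V]
    (w : V → V → ℝ)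
    (hsymm : ∀ a b : V, w a b = w b a)
    (hnonneg : ∀ a b : V, 0 ≤ w a b)
    (δ : V → ℝ) (hδ : ∀ a : V, δ a = ∑ b, w a b)
    (W : ℝ) (hW : 2 * W = ∑ a, δ a) (hWpos : 0 < W)
    (S : Finset (Finset V))
    (hcover : ∀ v : V, ∃ C ∈ S, v ∈ C)
    (hdisj : ∀ C ∈ S, ∀ C' ∈ S, C ≠ C' → Disjoint C C')
    (hne : ∀ C ∈ S, C.Nonempty)
    (c : V → Finset V) (hc : ∀ v : V, c v ∈ S ∧ v ∈ c v)
    (w' : {C // C ∈ S} → {C // C ∈ S} → ℝ)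
    (hw' : ∀ C C' : {C // C ∈ S}, w' C C' = ∑ i ∈ C.1, ∑ j ∈ C'.1, w i j)
    (δ' : {C // C ∈ S} → ℝ) (hδ' : ∀ C : {C // C ∈ S}, δ' C = ∑ C', w' C C')
    (W' : ℝ) (hW' : 2 * W' = ∑ C : {C // C ∈ S}, δ' C) :
    W' = W ∧
      (1 / (2 * W')) * (∑ C : {C // C ∈ S}, w' C C)
          - ∑ C : {C // C ∈ S}, (δ' C / (2 * W')) ^ 2
        = (1 / (2 * W)) * (∑ v, ∑ j ∈ c v, w v j)
          - ∑ C ∈ S, ((∑ v ∈ C, δ v) / (2 * W)) ^ 2 := by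

  have hpart : ∀ f : V → ℝ, ∑ v, f v = ∑ C ∈ S, ∑ v ∈ C, f v := by
    intro f
    have huniv : (Finset.univ : Finset V) = S.biUnion id := by
      ext v; simp only [mem_univ, mem_biUnion, id, true_iff]
      exact hcover v
    rw [huniv]
    exact Finset.sum_biUnion (fun C hC C' hC' hne' => hdisj C hC C' hC' hne')
  have hcu : ∀ C ∈ S, ∀ v ∈ C, c v = C := by
    intro C hC v hv
    by_contra h
    exact Finset.disjoint_left.mp (hdisj _ (hc v).1 C hC h) (hc v).2 hv
  have hsub : ∀ g : Finset V → ℝ, ∑ C : {C // C ∈ S}, g C.1 = ∑ C ∈ S, g C := by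
    intro g
    rw [← Finset.sum_attach S g]
    rfl
  have hδ'eq : ∀ C : {C // C ∈ S}, δ' C = ∑ v ∈ C.1, δ v := by
    intro C
    rw [hδ' C]
    simp only [hw']
    rw [Finset.sum_comm]
    refine Finset.sum_congr rfl fun i _ => ?_
    rw [hsub (fun C' => ∑ j ∈ C', w i j), ← hpart, ← hδ]
  have hWW : W' = W := by
    have h2 : 2 * W' = 2 * W := by
      rw [hW', hW]
      calc ∑ C : {C // C ∈ S}, δ' C = ∑ C ∈ S, ∑ v ∈ C, δ v := by
            simp only [hδ'eq]; exact hsub (fun C => ∑ v ∈ C, δ v)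
        _ = ∑ a, δ a := (hpart δ).symm
    linarith
  refine ⟨hWW, ?_⟩
  rw [hWW]
  congr 1
  · congr 1
    simp only [hw']
    rw [hsub (fun C => ∑ i ∈ C, ∑ j ∈ C, w i j), hpart (fun v => ∑ j ∈ c v, w v j)]
    refine Finset.sum_congr rfl fun C hC => Finset.sum_congr rfl fun v hv => ?_
    rw [hcu C hC v hv]
  · simp only [hδ'eq]
    exact hsub (fun C => ((∑ v ∈ C, δ v) / (2 * W)) ^ 2)
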